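/- Let n ∈ ℕ and let χ : ℝⁿ → ℝ be a C^∞ function whose support is contained in the closed unit ball. Then there exists a sequence (ε_ℓ)_{ℓ∈ℕ} with ε_ℓ ∈ (0,1) for every ℓ such that for every r ∈ (0,1] and every polynomial function p : ℝⁿ → ℝ the series Σ_{ℓ=0}^∞ ε_ℓ · sup_{x∈ℝⁿ} ‖D^ℓ(χ_r · p)(x)‖ converges, where χ_r(x) := χ(x/r) and D^ℓ g denotes the ℓ-th iterated Fréchet derivative of g, measured in the operator norm on ℓ-multilinear maps. -/

import Mathlib

open Metric Set Function

section Aux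

variable {n : ℕ}

private lemma contDiff_mvpoly (p : MvPolynomial (Fin n) ℝ) :
    ContDiff ℝ (⊤ : ℕ∞) (fun x : Fin n → ℝ => MvPolynomial.eval x p) := by
  induction p using MvPolynomial.induction_on with
  | C a => simpa using contDiff_const (c := a)
  | add p q hp hq => simpa using hp.add hq
  | mul_X p i hp =>
      simpa [MvPolynomial.eval_mul] using hp.mul ((ContinuousLinearMap.proj i :
        (Fin n → ℝ) →L[ℝ] ℝ).contDiff)

private lemma clm_iteratedFDeriv_eq_zero {E F : Type*} [NormedAddCommGroup E] [NormedSpace ℝ E]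
    [NormedAddCommGroup F] [NormedSpace ℝ F] (g : E →L[ℝ] F) {k : ℕ} (hk : 2 ≤ k)
    (x : E) : iteratedFDeriv ℝ k (⇑g) x = 0 := by
  obtain ⟨m, rfl⟩ : ∃ m, k = m + 2 := ⟨k - 2, by omega⟩
  rw [← norm_eq_zero, ← norm_iteratedFDeriv_fderiv (n := m + 1)]
  have : fderiv ℝ (⇑g) = fun _ => (g : E →L[ℝ] F) := by funext y; exact g.fderiv
  rw [this, iteratedFDeriv_const_of_ne (by omega)]
  simp

private lemma mvpoly_iteratedFDeriv_eventually_zero (p : MvPolynomial (Fin n) ℝ) :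
    ∃ D : ℕ, ∀ j : ℕ, D < j → ∀ x : Fin n → ℝ,
      iteratedFDeriv ℝ j (fun x : Fin n → ℝ => MvPolynomial.eval x p) x = 0 := by
  induction p using MvPolynomial.induction_on with
  | C a =>
      refine ⟨0, fun j hj x => ?_⟩
      have : (fun x : Fin n → ℝ => MvPolynomial.eval x (MvPolynomial.C a)) = fun _ => a := by
        funext x; simp
      rw [this, iteratedFDeriv_const_of_ne (by omega)]
      rfl
  | add p q hp hq =>
      obtain ⟨D₁, h₁⟩ := hp
      obtain ⟨D₂, h₂⟩ := hq
      refine ⟨max D₁ D₂, fun j hj x => ?_⟩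
      have heq : (fun x : Fin n → ℝ => MvPolynomial.eval x (p + q)) =
          (fun x => MvPolynomial.eval x p) + fun x => MvPolynomial.eval x q := by
        funext x; simp
      rw [heq]
      have := iteratedFDeriv_add_apply (i := j)
        ((contDiff_mvpoly p).of_le (by exact_mod_cast le_top) : ContDiff ℝ j (fun x : Fin n → ℝ => MvPolynomial.eval x p)).contDiffAt
        ((contDiff_mvpoly q).of_le (by exact_mod_cast le_top) : ContDiff ℝ j (fun x : Fin n → ℝ => MvPolynomial.eval x q)).contDiffAt (x := x)
      rw [this, h₁ j (by omega) x, h₂ j (by omega) x, add_zero]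
  | mul_X p i hp =>
      obtain ⟨D, hD⟩ := hp
      refine ⟨D + 2, fun j hj x => ?_⟩
      have heq : (fun x : Fin n → ℝ => MvPolynomial.eval x (p * MvPolynomial.X i)) =
          fun x : Fin n → ℝ => MvPolynomial.eval x p * x i := by
        funext x; simp
      rw [heq, ← norm_eq_zero]
      have hb := norm_iteratedFDeriv_mul_le (𝕜 := ℝ)
        (contDiff_mvpoly p)
        ((ContinuousLinearMap.proj i : (Fin n → ℝ) →L[ℝ] ℝ).contDiff)
        x (n := j) (by exact_mod_cast le_top)
      have hzero : ∀ k ∈ Finset.range (j + 1),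
          (j.choose k : ℝ) * ‖iteratedFDeriv ℝ k (fun x : Fin n → ℝ => MvPolynomial.eval x p) x‖ *
            ‖iteratedFDeriv ℝ (j - k) (⇑(ContinuousLinearMap.proj i :
              (Fin n → ℝ) →L[ℝ] ℝ)) x‖ = 0 := by
        intro k hk
        rcases le_or_gt k D with h | h
        · have h2 : 2 ≤ j - k := by omega
          rw [clm_iteratedFDeriv_eq_zero
            (ContinuousLinearMap.proj i : (Fin n → ℝ) →L[ℝ] ℝ) h2 x]; simp
        · rw [hD k h x]; simp
      have hle : ‖iteratedFDeriv ℝ j (fun y : Fin n → ℝ => MvPolynomial.eval y p *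
          (ContinuousLinearMap.proj i : (Fin n → ℝ) →L[ℝ] ℝ) y) x‖ ≤ 0 := by
        refine hb.trans ?_
        rw [Finset.sum_congr rfl hzero]
        simp
      exact le_antisymm hle (norm_nonneg _)

private lemma mvpoly_deriv_bound (p : MvPolynomial (Fin n) ℝ) :
    ∃ Np : ℝ, 0 ≤ Np ∧ ∀ j : ℕ, ∀ x ∈ closedBall (0 : Fin n → ℝ) 1,
      ‖iteratedFDeriv ℝ j (fun x : Fin n → ℝ => MvPolynomial.eval x p) x‖ ≤ Np := by
  obtain ⟨D, hD⟩ := mvpoly_iteratedFDeriv_eventually_zero p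
  have hcont : ∀ j : ℕ, Continuous
      (iteratedFDeriv ℝ j (fun x : Fin n → ℝ => MvPolynomial.eval x p)) := fun j =>
    ContDiff.continuous_iteratedFDeriv (m := j)
      (n := (((⊤ : ℕ∞)) : WithTop ℕ∞)) (by exact_mod_cast le_top) (contDiff_mvpoly p)
  choose C hC using fun j : ℕ =>
    (isCompact_closedBall (0 : Fin n → ℝ) 1).exists_bound_of_continuousOn
      ((hcont j).continuousOn)
  refine ⟨∑ j ∈ Finset.range (D + 1), max 0 (C j), Finset.sum_nonneg fun j _ => le_max_left _ _,
    fun j x hx => ?_⟩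
  rcases le_or_gt j D with h | h
  · calc ‖iteratedFDeriv ℝ j (fun x : Fin n → ℝ => MvPolynomial.eval x p) x‖
        ≤ C j := hC j x hx
      _ ≤ max 0 (C j) := le_max_right _ _
      _ ≤ ∑ j ∈ Finset.range (D + 1), max 0 (C j) :=
        Finset.single_le_sum (fun k _ => le_max_left 0 (C k)) (by simp; omega)
  · rw [hD j h x]
    simpa using Finset.sum_nonneg fun k _ => le_max_left 0 (C k)

private lemma summable_aux {ρ : ℝ} (hρ : 1 ≤ ρ) :
    Summable (fun ℓ : ℕ => ρ ^ ℓ * (1 / 2 : ℝ) ^ (ℓ * ℓ)) := by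
  obtain ⟨k, hk⟩ := pow_unbounded_of_one_lt ρ (by norm_num : (1 : ℝ) < 2)
  rw [← summable_nat_add_iff (k + 1)]
  have hsum : Summable (fun ℓ : ℕ => (1 / 2 : ℝ) ^ (k + 1) * (1 / 2) ^ ℓ) :=
    summable_geometric_two.mul_left _
  refine Summable.of_nonneg_of_le (fun ℓ => by positivity) (fun ℓ => ?_) hsum
  set m := ℓ + (k + 1) with hm
  have hρ0 : (0 : ℝ) ≤ ρ := by linarith
  have h1 : ρ ^ m * (1 / 2 : ℝ) ^ (m * m) ≤ ((2 : ℝ) ^ k) ^ m * (1 / 2) ^ (m * m) :=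
    mul_le_mul_of_nonneg_right (pow_le_pow_left₀ hρ0 hk.le m) (by positivity)
  have hkm : k * m ≤ m * m := Nat.mul_le_mul_right m (by omega)
  have h2 : ((2 : ℝ) ^ k) ^ m * (1 / 2) ^ (m * m) = (1 / 2 : ℝ) ^ (m * m - k * m) := by
    have hsplit : (1 / 2 : ℝ) ^ (m * m) = (1 / 2 : ℝ) ^ (k * m) * (1 / 2) ^ (m * m - k * m) := by
      rw [← pow_add]; congr 1; omega
    have hone : (2 : ℝ) ^ (k * m) * (1 / 2 : ℝ) ^ (k * m) = 1 := by
      rw [one_div, inv_pow, mul_inv_cancel₀ (by positivity)]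
    rw [← pow_mul, hsplit, ← mul_assoc, hone, one_mul]
  have h3 : (1 / 2 : ℝ) ^ (m * m - k * m) ≤ (1 / 2 : ℝ) ^ m := by
    apply pow_le_pow_of_le_one (by norm_num) (by norm_num)
    have : m * m - k * m = (m - k) * m := by rw [Nat.sub_mul]
    rw [this]
    calc m = 1 * m := (one_mul m).symm
      _ ≤ (m - k) * m := Nat.mul_le_mul_right m (by omega)
  have h4 : (1 / 2 : ℝ) ^ m = (1 / 2 : ℝ) ^ (k + 1) * (1 / 2) ^ ℓ := by
    rw [hm, pow_add, mul_comm]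
  calc ρ ^ m * (1 / 2 : ℝ) ^ (m * m) ≤ (1 / 2 : ℝ) ^ (m * m - k * m) := h1.trans_eq h2
    _ ≤ (1 / 2 : ℝ) ^ m := h3
    _ = _ := h4

end Aux

/-- **Floer's `C^∞_ε` norms of rescaled cutoffs of polynomials.**
Given a smooth function `χ : ℝⁿ → ℝ` supported in the closed unit ball, there is a
sequence `ε : ℕ → (0,1)` such that for every `r ∈ (0,1]` and every polynomial `p`, the
series `∑ ℓ, ε ℓ * ‖D^ℓ (χ(·/r) · p)‖_{C⁰}` converges. -/
theorem stmt_12 (n : ℕ) (χ : (Fin n → ℝ) → ℝ) (hχ : ContDiff ℝ (⊤ : ℕ∞) χ)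
    (hsupp : tsupport χ ⊆ Metric.closedBall 0 1) :
    ∃ ε : ℕ → ℝ, (∀ ℓ : ℕ, ε ℓ ∈ Set.Ioo (0 : ℝ) 1) ∧
      ∀ r : ℝ, 0 < r → r ≤ 1 → ∀ p : MvPolynomial (Fin n) ℝ,
        Summable (fun ℓ : ℕ => ε ℓ *
          ⨆ x : Fin n → ℝ,
            ‖iteratedFDeriv ℝ ℓ (fun y => χ (r⁻¹ • y) * MvPolynomial.eval y p) x‖) := by
  -- compact support of χ and global bounds on its derivatives
  have hcs : HasCompactSupport χ :=
    HasCompactSupport.of_support_subset_isCompact (isCompact_closedBall _ _)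
      ((subset_closure).trans hsupp)
  choose C0 hC0 using fun j : ℕ =>
    (hcs.iteratedFDeriv j).exists_bound_of_continuous
      (hχ.continuous_iteratedFDeriv (by exact_mod_cast le_top))
  set M : ℕ → ℝ := fun ℓ => ∑ i ∈ Finset.range (ℓ + 1), (ℓ.choose i : ℝ) * max 0 (C0 i) with hM
  have hMnonneg : ∀ ℓ, 0 ≤ M ℓ := fun ℓ =>
    Finset.sum_nonneg fun i _ => mul_nonneg (by positivity) (le_max_left _ _)
  refine ⟨fun ℓ => min (1 / 2) ((1 / 2) ^ (ℓ * ℓ) / (1 + M ℓ)), fun ℓ => ⟨?_, ?_⟩, ?_⟩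
  · have := hMnonneg ℓ
    apply lt_min (by norm_num)
    positivity
  · exact lt_of_le_of_lt (min_le_left _ _) (by norm_num)
  intro r hr hr1 p
  obtain ⟨Np, hNp0, hNp⟩ := mvpoly_deriv_bound p
  have hrinv : (1 : ℝ) ≤ r⁻¹ := (one_le_inv₀ hr).2 hr1
  have hrinv0 : (0 : ℝ) ≤ r⁻¹ := by linarith
  set L : (Fin n → ℝ) →L[ℝ] (Fin n → ℝ) := r⁻¹ • ContinuousLinearMap.id ℝ (Fin n → ℝ) with hL
  have hLapp : ∀ y, L y = r⁻¹ • y := fun y => by simp [hL]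
  have hLnorm : ‖L‖ ≤ r⁻¹ := by
    calc ‖L‖ ≤ ‖r⁻¹‖ * ‖ContinuousLinearMap.id ℝ (Fin n → ℝ)‖ := ContinuousLinearMap.opNorm_smul_le _ _
      _ ≤ ‖r⁻¹‖ * 1 := by
          exact mul_le_mul_of_nonneg_left ContinuousLinearMap.norm_id_le (norm_nonneg _)
      _ = r⁻¹ := by rw [mul_one, Real.norm_eq_abs, abs_of_nonneg hrinv0]
  have hcr : ContDiff ℝ (⊤ : ℕ∞) (fun y : Fin n → ℝ => χ (r⁻¹ • y)) := hχ.comp L.contDiff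
  -- bound on derivatives of the rescaled cutoff
  have hcrbound : ∀ (j : ℕ) (x : Fin n → ℝ),
      ‖iteratedFDeriv ℝ j (fun y : Fin n → ℝ => χ (r⁻¹ • y)) x‖ ≤ r⁻¹ ^ j * max 0 (C0 j) := by
    intro j x
    have hcomp : (fun y : Fin n → ℝ => χ (r⁻¹ • y)) = χ ∘ L := by
      funext y; simp [hLapp y]
    rw [hcomp, L.iteratedFDeriv_comp_right hχ x (by exact_mod_cast le_top)]
    calc ‖(iteratedFDeriv ℝ j χ (L x)).compContinuousLinearMap fun _ => L‖
        ≤ ‖iteratedFDeriv ℝ j χ (L x)‖ * ∏ _i : Fin j, ‖L‖ :=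
          ContinuousMultilinearMap.norm_compContinuousLinearMap_le _ _
      _ ≤ max 0 (C0 j) * r⁻¹ ^ j := by
          apply mul_le_mul ((hC0 j (L x)).trans (le_max_right _ _))
          · rw [Finset.prod_const]
            simp only [Finset.card_univ, Fintype.card_fin]
            exact pow_le_pow_left₀ (norm_nonneg _) hLnorm j
          · exact Finset.prod_nonneg fun _ _ => norm_nonneg _
          · exact le_max_left _ _
      _ = r⁻¹ ^ j * max 0 (C0 j) := mul_comm _ _
  -- the product function and its support
  set f : (Fin n → ℝ) → ℝ := fun y => χ (r⁻¹ • y) * MvPolynomial.eval y p with hf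
  have hfsupp : tsupport f ⊆ closedBall (0 : Fin n → ℝ) 1 := by
    apply closure_minimal ?_ Metric.isClosed_closedBall
    intro y hy
    have hχy : χ (r⁻¹ • y) ≠ 0 := fun h => hy (by simp [hf, h])
    have : r⁻¹ • y ∈ tsupport χ := subset_closure hχy
    have h1 : ‖r⁻¹ • y‖ ≤ 1 := by
      have := hsupp this
      rwa [mem_closedBall_zero_iff] at this
    rw [mem_closedBall_zero_iff]
    rw [norm_smul, Real.norm_eq_abs, abs_of_nonneg hrinv0] at h1
    nlinarith [norm_nonneg y]
  -- pointwise bound on the iterated derivatives of f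
  have hpt : ∀ (ℓ : ℕ) (x : Fin n → ℝ),
      ‖iteratedFDeriv ℝ ℓ f x‖ ≤ r⁻¹ ^ ℓ * M ℓ * Np := by
    intro ℓ x
    have hbnd0 : 0 ≤ r⁻¹ ^ ℓ * M ℓ * Np :=
      mul_nonneg (mul_nonneg (pow_nonneg hrinv0 ℓ) (hMnonneg ℓ)) hNp0
    by_cases hx : x ∈ closedBall (0 : Fin n → ℝ) 1
    · have hb := norm_iteratedFDeriv_mul_le (𝕜 := ℝ) hcr (contDiff_mvpoly p) x
        (n := ℓ) (by exact_mod_cast le_top)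
      refine hb.trans ?_
      have hterm : ∀ i ∈ Finset.range (ℓ + 1),
          (ℓ.choose i : ℝ) * ‖iteratedFDeriv ℝ i (fun y : Fin n → ℝ => χ (r⁻¹ • y)) x‖ *
            ‖iteratedFDeriv ℝ (ℓ - i) (fun x : Fin n → ℝ => MvPolynomial.eval x p) x‖ ≤
          ((ℓ.choose i : ℝ) * max 0 (C0 i)) * (r⁻¹ ^ ℓ * Np) := by
        intro i hi
        simp only [Finset.mem_range] at hi
        have h1 : ‖iteratedFDeriv ℝ i (fun y : Fin n → ℝ => χ (r⁻¹ • y)) x‖ ≤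
            r⁻¹ ^ ℓ * max 0 (C0 i) := by
          refine (hcrbound i x).trans ?_
          exact mul_le_mul_of_nonneg_right (pow_le_pow_right₀ hrinv (by omega)) (le_max_left _ _)
        have h2 := hNp (ℓ - i) x hx
        have hstep : (ℓ.choose i : ℝ) * ‖iteratedFDeriv ℝ i (fun y : Fin n → ℝ =>
            χ (r⁻¹ • y)) x‖ * ‖iteratedFDeriv ℝ (ℓ - i)
              (fun x : Fin n → ℝ => MvPolynomial.eval x p) x‖ ≤
            ((ℓ.choose i : ℝ) * (r⁻¹ ^ ℓ * max 0 (C0 i))) * Np := by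
          apply mul_le_mul (mul_le_mul_of_nonneg_left h1 (by positivity)) h2
            (norm_nonneg _) (by positivity)
        refine hstep.trans (le_of_eq (by ring))
      refine (Finset.sum_le_sum hterm).trans ?_
      rw [← Finset.sum_mul]
      rw [hM]
      refine le_of_eq (by ring)
    · have hzero : iteratedFDeriv ℝ ℓ f x = 0 :=
        image_eq_zero_of_notMem_tsupport
          (fun h => hx (hfsupp (tsupport_iteratedFDeriv_subset ℓ h)))
      rw [hzero]
      simpa using hbnd0
  -- conclusion: comparison with a summable series
  have hsum := (summable_aux hrinv).mul_left Np
  refine Summable.of_nonneg_of_le (fun ℓ => ?_) (fun ℓ => ?_) hsum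
  · refine mul_nonneg (le_of_lt (lt_min (by norm_num) ?_))
      (Real.iSup_nonneg fun x => norm_nonneg _)
    have := hMnonneg ℓ
    positivity
  · have hbnd0 : 0 ≤ r⁻¹ ^ ℓ * M ℓ * Np :=
      mul_nonneg (mul_nonneg (pow_nonneg hrinv0 ℓ) (hMnonneg ℓ)) hNp0
    have hS : (⨆ x : Fin n → ℝ, ‖iteratedFDeriv ℝ ℓ f x‖) ≤ r⁻¹ ^ ℓ * M ℓ * Np :=
      Real.iSup_le (fun x => hpt ℓ x) hbnd0
    have hM0 := hMnonneg ℓ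
    have hε0 : (0 : ℝ) ≤ min (1 / 2) ((1 / 2) ^ (ℓ * ℓ) / (1 + M ℓ)) :=
      le_min (by norm_num) (by positivity)
    calc min (1 / 2) ((1 / 2) ^ (ℓ * ℓ) / (1 + M ℓ)) *
          (⨆ x : Fin n → ℝ, ‖iteratedFDeriv ℝ ℓ f x‖)
        ≤ min (1 / 2) ((1 / 2) ^ (ℓ * ℓ) / (1 + M ℓ)) * (r⁻¹ ^ ℓ * M ℓ * Np) :=
          mul_le_mul_of_nonneg_left hS hε0
      _ ≤ ((1 / 2) ^ (ℓ * ℓ) / (1 + M ℓ)) * (r⁻¹ ^ ℓ * M ℓ * Np) :=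
          mul_le_mul_of_nonneg_right (min_le_right _ _) hbnd0
      _ ≤ Np * (r⁻¹ ^ ℓ * (1 / 2 : ℝ) ^ (ℓ * ℓ)) := by
          rw [div_mul_eq_mul_div, div_le_iff₀ (by positivity)]
          nlinarith [mul_nonneg (mul_nonneg hNp0 (pow_nonneg hrinv0 ℓ))
            (pow_nonneg (by norm_num : (0:ℝ) ≤ 1/2) (ℓ * ℓ))]
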